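/- Let n ≥ 2 and d ≥ 1 be integers and let a_1 ≤ … ≤ a_n be integers with 1 ≤ a_i ≤ d for all i and a_1 + … + a_n > d. For i ≥ 0 let H(i) be the number of tuples (α_1,…,α_n) of non-negative integers with α_1 + … + α_n = i·d and α_j ≤ i·a_j for all j. Then (n−1)! · H(i) / i^{n−1} converges, as i → ∞, to Σ_{S ∈ 𝒮} (−1)^{|S|} (d − ΣS)^{n−1}. (This limit is the multiplicity of the Veronese-type algebra 𝒱(a_1,…,a_n; d).) -/

import Mathlib

open Finset

private lemma card_adt (k : ℕ) :
    ∀ m, (Finset.Nat.antidiagonalTuple (k+1) m).card = (m + k).choose k := by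
  induction k with
  | zero => intro m; rw [Finset.Nat.antidiagonalTuple_one]; simp
  | succ k ih =>
    intro m
    rw [Finset.card_eq_sum_card_fiberwise (f := fun f => f 0) (t := range (m+1))
      (fun x hx => by
        rw [Finset.mem_coe, Finset.Nat.mem_antidiagonalTuple] at hx
        exact mem_range.2 (Nat.lt_succ_of_le
          (hx ▸ Finset.single_le_sum (fun j _ => Nat.zero_le _) (mem_univ 0))))]
    have hfib : ∀ j ∈ range (m+1),
        ((Finset.Nat.antidiagonalTuple (k+2) m).filter (fun f => f 0 = j)).card
          = (Finset.Nat.antidiagonalTuple (k+1) (m - j)).card := by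
      intro j hj
      rw [mem_range, Nat.lt_succ_iff] at hj
      refine Finset.card_bij' (fun f _ => Fin.tail f) (fun g _ => Fin.cons j g) ?hi ?hj ?li ?ri
      case hi =>
        intro f hf
        rw [mem_filter, Finset.Nat.mem_antidiagonalTuple] at hf
        rw [Finset.Nat.mem_antidiagonalTuple]
        have := hf.1
        rw [← Fin.cons_self_tail f, Fin.sum_cons, hf.2] at this
        exact eq_tsub_of_add_eq (by rw [Nat.add_comm]; exact this)
      case hj =>
        intro g hg
        rw [Finset.Nat.mem_antidiagonalTuple] at hg
        rw [mem_filter, Finset.Nat.mem_antidiagonalTuple, Fin.sum_cons, hg]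
        exact ⟨by omega, by simp⟩
      case li =>
        intro f hf
        rw [mem_filter] at hf
        have h := Fin.cons_self_tail f
        rw [hf.2] at h
        exact h
      case ri =>
        intro g _
        exact Fin.tail_cons (α := fun _ => ℕ) j g
    rw [Finset.sum_congr rfl hfib]
    have h2 : ∀ j ∈ range (m+1),
        (Finset.Nat.antidiagonalTuple (k+1) (m - j)).card = (m - j + k).choose k :=
      fun j _ => ih (m - j)
    rw [Finset.sum_congr rfl h2, ← Finset.sum_range_reflect]
    have h3 : ∀ j ∈ range (m+1), (m - (m + 1 - 1 - j) + k).choose k = (j + k).choose k := by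
      intro j hj; rw [mem_range, Nat.lt_succ_iff] at hj
      congr 2; omega
    rw [Finset.sum_congr rfl h3, Nat.sum_range_add_choose]
    congr 1

private lemma asc_prod (m : ℕ) : ∀ k, (m+1).ascFactorial k = ∏ t ∈ range k, (m + 1 + t)
  | 0 => by simp
  | k + 1 => by rw [Nat.ascFactorial_succ, prod_range_succ, asc_prod m k]; ring

private lemma IE (n M : ℕ) (b : Fin n → ℕ) :
    (((Finset.Nat.antidiagonalTuple n M).filter (fun α => ∀ j, α j ≤ b j)).card : ℤ)
      = ∑ S ∈ (univ : Finset (Fin n)).powerset, (-1:ℤ)^S.card *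
          (((Finset.Nat.antidiagonalTuple n M).filter (fun α => ∀ j ∈ S, b j < α j)).card : ℤ) := by
  classical
  set A := Finset.Nat.antidiagonalTuple n M with hA
  have key : ∀ α : Fin n → ℕ, (if (∀ j, α j ≤ b j) then (1:ℤ) else 0)
      = ∑ S ∈ (univ : Finset (Fin n)).powerset,
          (if ∀ j ∈ S, b j < α j then (-1:ℤ)^S.card else 0) := by
    intro α
    have hps : (univ.filter fun j => b j < α j).powerset
        = (univ : Finset (Fin n)).powerset.filter (fun S => ∀ j ∈ S, b j < α j) := by
      ext S
      simp [Finset.mem_powerset, Finset.subset_iff]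
    rw [← Finset.sum_filter, ← hps, Finset.sum_powerset_neg_one_pow_card]
    refine if_congr ?_ rfl rfl
    rw [Finset.filter_eq_empty_iff]
    simp [not_lt]
  calc ((A.filter (fun α => ∀ j, α j ≤ b j)).card : ℤ)
      = ∑ α ∈ A, (if (∀ j, α j ≤ b j) then (1:ℤ) else 0) := by
        rw [Finset.card_filter]; push_cast; rfl
    _ = ∑ α ∈ A, ∑ S ∈ (univ : Finset (Fin n)).powerset,
          (if ∀ j ∈ S, b j < α j then (-1:ℤ)^S.card else 0) :=
        Finset.sum_congr rfl fun α _ => key α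
    _ = ∑ S ∈ (univ : Finset (Fin n)).powerset, ∑ α ∈ A,
          (if ∀ j ∈ S, b j < α j then (-1:ℤ)^S.card else 0) := Finset.sum_comm
    _ = ∑ S ∈ (univ : Finset (Fin n)).powerset, (-1:ℤ)^S.card *
          ((A.filter (fun α => ∀ j ∈ S, b j < α j)).card : ℤ) := by
        refine Finset.sum_congr rfl fun S _ => ?_
        rw [← Finset.sum_filter, Finset.sum_const, nsmul_eq_mul, mul_comm]

private lemma vanish (n M : ℕ) (b : Fin n → ℕ) (S : Finset (Fin n))
    (h : M < ∑ j ∈ S, b j + S.card) :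
    (Finset.Nat.antidiagonalTuple n M).filter (fun α => ∀ j ∈ S, b j < α j) = ∅ := by
  rw [Finset.filter_eq_empty_iff]
  intro α hα hlt
  rw [Finset.Nat.mem_antidiagonalTuple] at hα
  have h1 : ∑ j ∈ S, (b j + 1) ≤ ∑ j ∈ S, α j := Finset.sum_le_sum (fun j hj => hlt j hj)
  have h2 : ∑ j ∈ S, α j ≤ ∑ j, α j := Finset.sum_le_sum_of_subset (Finset.subset_univ S)
  rw [Finset.sum_add_distrib, Finset.sum_const, smul_eq_mul, mul_one] at h1
  omega

private lemma shift (n M m : ℕ) (b : Fin n → ℕ) (S : Finset (Fin n))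
    (hm : m + (∑ j ∈ S, b j + S.card) = M) :
    ((Finset.Nat.antidiagonalTuple n M).filter (fun α => ∀ j ∈ S, b j < α j)).card
      = (Finset.Nat.antidiagonalTuple n m).card := by
  classical
  set e : Fin n → ℕ := fun j => if j ∈ S then b j + 1 else 0 with he
  have hesum : ∑ j, e j = ∑ j ∈ S, b j + S.card := by
    rw [he]
    rw [Finset.sum_ite_mem univ S (fun j => b j + 1), Finset.univ_inter,
      Finset.sum_add_distrib, Finset.sum_const, smul_eq_mul, mul_one]
  refine Finset.card_bij' (fun α _ => fun j => α j - e j) (fun β _ => fun j => β j + e j)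
    ?hi ?hj ?li ?ri
  case hi =>
    intro α hα
    rw [Finset.mem_filter, Finset.Nat.mem_antidiagonalTuple] at hα
    obtain ⟨h1, h2⟩ := hα
    have hle : ∀ j, e j ≤ α j := by
      intro j
      by_cases hj : j ∈ S
      · simp only [he, if_pos hj]; exact h2 j hj
      · simp only [he, if_neg hj]; exact Nat.zero_le _
    rw [Finset.Nat.mem_antidiagonalTuple]
    show ∑ i, (α i - e i) = m
    rw [Finset.sum_tsub_distrib univ (fun j _ => hle j), h1, hesum]
    omega
  case hj =>
    intro β hβ
    rw [Finset.Nat.mem_antidiagonalTuple] at hβ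
    rw [Finset.mem_filter, Finset.Nat.mem_antidiagonalTuple]
    show (∑ i, (β i + e i) = M) ∧ _
    rw [Finset.sum_add_distrib, hβ, hesum]
    refine ⟨hm, fun j hj => ?_⟩
    show b j < β j + e j
    simp only [he, if_pos hj]
    omega
  case li =>
    intro α hα
    rw [Finset.mem_filter] at hα
    funext j
    show α j - e j + e j = α j
    refine Nat.sub_add_cancel ?_
    by_cases hj : j ∈ S
    · simp only [he, if_pos hj]; exact hα.2 j hj
    · simp only [he, if_neg hj]; exact Nat.zero_le _
  case ri =>
    intro β _
    funext j
    show β j + e j - e j = β j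
    omega

/-- The multiplicity of the Veronese-type algebra `𝒱(a₁,…,aₙ; d)`: with `H(i)` the number
of tuples `(α₁,…,αₙ)` of non-negative integers with `Σ αⱼ = i·d` and `αⱼ ≤ i·aⱼ`,
the quantity `(n−1)! · H(i) / i^{n−1}` converges, as `i → ∞`, to
`Σ_{S ∈ 𝒮} (−1)^{|S|} (d − ΣS)^{n−1}`. -/
theorem multiplicity_veronese_type
    (n d : ℕ) (hn : 2 ≤ n) (hd : 0 < d) (a : Fin n → ℕ)
    (hmono : Monotone a) (h1 : ∀ j, 1 ≤ a j) (hle : ∀ j, a j ≤ d)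
    (hsum : d < ∑ j, a j) :
    Filter.Tendsto
      (fun i : ℕ =>
        (((n - 1).factorial : ℝ) *
            ((Finset.filter (fun α : Fin n → ℕ => ∑ j, α j = i * d)
                (Fintype.piFinset fun j => Finset.range (i * a j + 1))).card : ℝ)) /
          (i : ℝ) ^ (n - 1))
      Filter.atTop
      (nhds (∑ S ∈ Finset.univ.powerset.filter (fun S : Finset (Fin n) => ∑ j ∈ S, a j < d),
        (-1 : ℝ) ^ S.card * ((d : ℝ) - ∑ j ∈ S, (a j : ℝ)) ^ (n - 1))) := by
  obtain ⟨k, rfl⟩ : ∃ k, n = k + 2 := ⟨n - 2, by omega⟩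
  classical
  set 𝒮 := (univ : Finset (Fin (k+2))).powerset.filter (fun S => ∑ j ∈ S, a j < d) with h𝒮
  -- the comparison real-valued function
  set G : ℕ → ℝ := fun i => ∑ S ∈ 𝒮, (-1:ℝ)^S.card *
      ∏ t ∈ range (k+1),
        (((i:ℝ) * ((d:ℝ) - ∑ j ∈ S, (a j:ℝ)) - (S.card:ℝ) + 1 + (t:ℝ)) / (i:ℝ)) with hG
  -- the integer-level identity
  have hcard : ∀ i : ℕ,
      (Finset.filter (fun α : Fin (k+2) → ℕ => ∑ j, α j = i * d)
        (Fintype.piFinset fun j => Finset.range (i * a j + 1)))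
      = ((Finset.Nat.antidiagonalTuple (k+2) (i*d)).filter (fun α => ∀ j, α j ≤ i * a j)) := by
    intro i; ext α
    simp [Fintype.mem_piFinset, Finset.Nat.mem_antidiagonalTuple, Nat.lt_succ_iff, and_comm]
  have hsub : ∀ i : ℕ, k + 2 ≤ i → ∀ S ∈ 𝒮, i * (∑ j ∈ S, a j) + S.card ≤ i * d := by
    intro i hi S hS
    rw [h𝒮, mem_filter] at hS
    have hc : S.card ≤ i := by
      have := Finset.card_le_univ S
      simp only [Finset.card_univ, Fintype.card_fin] at this
      omega
    have h2 : i * ((∑ j ∈ S, a j) + 1) ≤ i * d := Nat.mul_le_mul_left i hS.2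
    have h3 : i * ((∑ j ∈ S, a j) + 1) = i * (∑ j ∈ S, a j) + i := Nat.mul_succ i _
    omega
  have hint : ∀ i : ℕ, k + 2 ≤ i →
      ((((Finset.Nat.antidiagonalTuple (k+2) (i*d)).filter
          (fun α => ∀ j, α j ≤ i * a j)).card : ℤ))
        = ∑ S ∈ 𝒮, (-1:ℤ)^S.card *
            (((i*d - (i*(∑ j ∈ S, a j) + S.card) + (k+1)).choose (k+1) : ℕ) : ℤ) := by
    intro i hi
    rw [IE (k+2) (i*d) (fun j => i * a j)]
    rw [← Finset.sum_subset (Finset.filter_subset (fun S : Finset (Fin (k+2)) => ∑ j ∈ S, a j < d) (univ : Finset (Fin (k+2))).powerset) ?hzero]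
    case hzero =>
      intro S hS hnS
      rw [mem_filter] at hnS
      have hSd : d ≤ ∑ j ∈ S, a j := by
        rcases Nat.lt_or_ge (∑ j ∈ S, a j) d with h | h
        · exact absurd ⟨hS, h⟩ hnS
        · exact h
      have hne : S.Nonempty := by
        rw [Finset.nonempty_iff_ne_empty]
        rintro rfl
        simp at hSd
        omega
      have hv : (Finset.Nat.antidiagonalTuple (k+2) (i*d)).filter
          (fun α => ∀ j ∈ S, i * a j < α j) = ∅ := by
        refine vanish _ _ _ _ ?_
        have : ∑ j ∈ S, i * a j = i * ∑ j ∈ S, a j := by rw [Finset.mul_sum]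
        have h2 : i * d ≤ i * ∑ j ∈ S, a j := Nat.mul_le_mul_left i hSd
        have h3 : 0 < S.card := Finset.card_pos.2 hne
        omega
      rw [hv]
      simp
    refine Finset.sum_congr rfl fun S hS => ?_
    congr 1
    rw [shift (k+2) (i*d) (i*d - (i*(∑ j ∈ S, a j) + S.card)) (fun j => i * a j) S ?hm]
    · exact_mod_cast congrArg (Nat.cast (R := ℤ)) (card_adt (k+1) _)
    case hm =>
      have : ∑ j ∈ S, i * a j = i * ∑ j ∈ S, a j := by rw [Finset.mul_sum]
      rw [this]
      have := hsub i hi S hS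
      omega
  -- the eventual equality
  have hmain : ∀ i : ℕ, k + 2 ≤ i →
      ((((k+2) - 1).factorial : ℝ) *
          ((Finset.filter (fun α : Fin (k+2) → ℕ => ∑ j, α j = i * d)
              (Fintype.piFinset fun j => Finset.range (i * a j + 1))).card : ℝ)) /
        (i : ℝ) ^ ((k+2) - 1) = G i := by
    intro i hi
    have hi0 : (0:ℝ) < (i:ℝ) := by
      have : 0 < i := by omega
      exact_mod_cast this
    have hb : ((Finset.filter (fun α : Fin (k+2) → ℕ => ∑ j, α j = i * d)
          (Fintype.piFinset fun j => Finset.range (i * a j + 1))).card : ℝ)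
        = ∑ S ∈ 𝒮, (-1:ℝ)^S.card *
            (((i*d - (i*(∑ j ∈ S, a j) + S.card) + (k+1)).choose (k+1) : ℕ) : ℝ) := by
      rw [hcard i]
      exact_mod_cast hint i hi
    show (((k+1).factorial : ℝ) * _) / (i : ℝ) ^ (k+1) = G i
    rw [hb, Finset.mul_sum, Finset.sum_div, hG]
    refine Finset.sum_congr rfl fun S hS => ?_
    set m : ℕ := i*d - (i*(∑ j ∈ S, a j) + S.card) with hmdef
    have hval : (k+1).factorial * ((m + (k+1)).choose (k+1)) = ∏ t ∈ range (k+1), (m + 1 + t) := by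
      rw [← Nat.ascFactorial_eq_factorial_mul_choose, asc_prod]
    have hmcast : (m:ℝ) = (i:ℝ) * ((d:ℝ) - ∑ j ∈ S, (a j:ℝ)) - (S.card:ℝ) := by
      rw [hmdef, Nat.cast_sub (hsub i hi S hS)]
      push_cast
      ring
    calc ((k+1).factorial : ℝ) * ((-1:ℝ)^S.card * (((m + (k+1)).choose (k+1) : ℕ) : ℝ))
          / (i : ℝ) ^ (k+1)
        = (-1:ℝ)^S.card * ((((k+1).factorial * ((m + (k+1)).choose (k+1)) : ℕ) : ℝ)
            / (i : ℝ) ^ (k+1)) := by push_cast; ring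
      _ = (-1:ℝ)^S.card * (((∏ t ∈ range (k+1), (m + 1 + t) : ℕ) : ℝ) / (i : ℝ) ^ (k+1)) := by
            rw [hval]
      _ = (-1:ℝ)^S.card * ∏ t ∈ range (k+1),
            (((i:ℝ) * ((d:ℝ) - ∑ j ∈ S, (a j:ℝ)) - (S.card:ℝ) + 1 + (t:ℝ)) / (i:ℝ)) := by
            congr 1
            rw [Nat.cast_prod]
            have hpow : (i:ℝ) ^ (k+1) = ∏ _t ∈ range (k+1), (i:ℝ) := by
              rw [Finset.prod_const, card_range]
            rw [hpow, ← Finset.prod_div_distrib]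
            refine Finset.prod_congr rfl fun t _ => ?_
            rw [← hmcast]
            push_cast
            ring
  -- the limit of G
  have hGlim : Filter.Tendsto G Filter.atTop
      (nhds (∑ S ∈ 𝒮, (-1 : ℝ) ^ S.card * ((d : ℝ) - ∑ j ∈ S, (a j : ℝ)) ^ (k+1))) := by
    rw [hG]
    refine tendsto_finset_sum 𝒮 fun S _ => ?_
    refine Filter.Tendsto.const_mul _ ?_
    have hprod : ((d : ℝ) - ∑ j ∈ S, (a j : ℝ)) ^ (k+1)
        = ∏ _t ∈ range (k+1), ((d : ℝ) - ∑ j ∈ S, (a j : ℝ)) := by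
      rw [Finset.prod_const, card_range]
    rw [hprod]
    refine tendsto_finset_prod (range (k+1)) fun t _ => ?_
    set c : ℝ := (d : ℝ) - ∑ j ∈ S, (a j : ℝ)
    have h0 : Filter.Tendsto (fun i : ℕ => c + ((1:ℝ) + (t:ℝ) - (S.card:ℝ)) * (i:ℝ)⁻¹)
        Filter.atTop (nhds c) := by
      have h1 := (tendsto_inv_atTop_nhds_zero_nat (𝕜 := ℝ)).const_mul ((1:ℝ) + (t:ℝ) - (S.card:ℝ))
      simpa using tendsto_const_nhds.add h1
    refine h0.congr' ?_
    filter_upwards [Filter.eventually_ge_atTop 1] with i hi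
    have hi0 : (i:ℝ) ≠ 0 := by
      have : 0 < i := hi
      positivity
    field_simp
    ring
  refine Filter.Tendsto.congr' ?_ hGlim
  filter_upwards [Filter.eventually_ge_atTop (k+2)] with i hi
  exact (hmain i hi).symm
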